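/- Let S be a zerosumfree semiring in which s, t complemented implies s + t complemented, T an ordered ring, and p : S → T a probability function. If s and t are complemented elements of S, then p(st) ≥ p(s) + p(t) − 1. -/

import Mathlib

/-- Let `S` be a zerosumfree commutative semiring in which the sum of two complemented
elements is complemented, `T` an ordered commutative ring, and `p : S → T` a probability
function. If `s` and `t` are complemented, then `p (st) ≥ p s + p t - 1`. -/
theorem probability_mul_ge
    {S T : Type*} [CommSemiring S] [CommRing T] [PartialOrder T] [IsOrderedRing T]
    (hzs : ∀ a b : S, a + b = 0 → a = 0 ∧ b = 0)
    (hsum : ∀ a b : S, (∃ ca, a * ca = 0 ∧ a + ca = 1) → (∃ cb, b * cb = 0 ∧ b + cb = 1) →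
      ∃ c, (a + b) * c = 0 ∧ (a + b) + c = 1)
    (p : S → T)
    (hnonneg : ∀ s : S, 0 ≤ p s)
    (hone : p 1 = 1)
    (hadd : ∀ a b : S, a * b = 0 → p (a + b) = p a + p b)
    (s t : S)
    (hs : ∃ cs, s * cs = 0 ∧ s + cs = 1)
    (ht : ∃ ct, t * ct = 0 ∧ t + ct = 1) :
    p s + p t - 1 ≤ p (s * t) := by
  obtain ⟨cs, hcs0, hcs1⟩ := hs
  obtain ⟨ct, hct0, hct1⟩ := ht
  have e1 : s * t * (s * ct) = 0 := by
    rw [show s * t * (s * ct) = s * s * (t * ct) by ring, hct0, mul_zero]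
  have h1 : p s = p (s * t) + p (s * ct) := by
    rw [← hadd _ _ e1, show s * t + s * ct = s * (t + ct) by ring, hct1, mul_one]
  have e2 : s * t * (cs * t) = 0 := by
    rw [show s * t * (cs * t) = t * t * (s * cs) by ring, hcs0, mul_zero]
  have h2 : p t = p (s * t) + p (cs * t) := by
    rw [← hadd _ _ e2, show s * t + cs * t = (s + cs) * t by ring, hcs1, one_mul]
  have e3 : cs * t * (cs * ct) = 0 := by
    rw [show cs * t * (cs * ct) = cs * cs * (t * ct) by ring, hct0, mul_zero]
  have h3 : p cs = p (cs * t) + p (cs * ct) := by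
    rw [← hadd _ _ e3, show cs * t + cs * ct = cs * (t + ct) by ring, hct1, mul_one]
  have h4 : p s + p cs = 1 := by rw [← hadd _ _ hcs0, hcs1, hone]
  have h5 : p s + p t - 1 = p (s * t) - p (cs * ct) := by
    have h4' : (1:T) = p (s * t) + p (s * ct) + (p (cs * t) + p (cs * ct)) := by
      rw [← h1, ← h3]; exact h4.symm
    rw [h1, h2, h4']; ring
  rw [h5]
  have := hnonneg (cs * ct)
  exact sub_le_self _ this
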